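/- In general, try C then P else Q is NOT semantically equivalent to if C then C;P else Q: there exist programs C, P, Q such that Sem(try C then P else Q) ≠ Sem(if C then C;P else Q). A witness is C = skip or fail, P = skip, Q = skip: the try-program cannot fail from any graph, while the if-program can fail from every graph. -/

import Mathlib

/-- GP 2 abstract program syntax over a type `R` of rule-set calls. -/
inductive Prog (R : Type) : Type where
  | call  : R → Prog R                               -- rule-set call
  | seq   : Prog R → Prog R → Prog R                 -- P;Q
  | ite   : Prog R → Prog R → Prog R → Prog R        -- if C then P else Q
  | tryte : Prog R → Prog R → Prog R → Prog R        -- try C then P else Q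
  | if1   : Prog R → Prog R → Prog R                 -- if C then P
  | try1  : Prog R → Prog R → Prog R                 -- try C then P
  | alap  : Prog R → Prog R                          -- P!
  | or    : Prog R → Prog R → Prog R                 -- P or Q
  | skip  : Prog R
  | fail  : Prog R

/-- Configurations: an unfinished computation ⟨P,G⟩, a proper result G, or failure. -/
inductive Config (R Graph : Type) : Type where
  | run    : Prog R → Graph → Config R Graph
  | result : Graph → Config R Graph
  | fail   : Config R Graph

mutual
/-- The small-step transition relation → of GP 2, relative to the
    rule-set application relation `apply` (G ⇒_R H). -/
inductive Step {R Graph : Type} (apply : R → Graph → Graph → Prop) :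
    Config R Graph → Config R Graph → Prop where
  | call₁ {r G H} : apply r G H → Step apply (.run (.call r) G) (.result H)
  | call₂ {r G} : (∀ H, ¬ apply r G H) → Step apply (.run (.call r) G) .fail
  | seq₁ {P Q P' G H} : Step apply (.run P G) (.run P' H) →
      Step apply (.run (.seq P Q) G) (.run (.seq P' Q) H)
  | seq₂ {P Q G H} : Step apply (.run P G) (.result H) →
      Step apply (.run (.seq P Q) G) (.run Q H)
  | seq₃ {P Q G} : Step apply (.run P G) .fail →
      Step apply (.run (.seq P Q) G) .fail
  | if₁ {C P Q G H} : StepPlus apply (.run C G) (.result H) →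
      Step apply (.run (.ite C P Q) G) (.run P G)
  | if₂ {C P Q G} : StepPlus apply (.run C G) .fail →
      Step apply (.run (.ite C P Q) G) (.run Q G)
  | try₁ {C P Q G H} : StepPlus apply (.run C G) (.result H) →
      Step apply (.run (.tryte C P Q) G) (.run P H)
  | try₂ {C P Q G} : StepPlus apply (.run C G) .fail →
      Step apply (.run (.tryte C P Q) G) (.run Q G)
  | alap₁ {P G H} : StepPlus apply (.run P G) (.result H) →
      Step apply (.run (.alap P) G) (.run (.alap P) H)
  | alap₂ {P G} : StepPlus apply (.run P G) .fail →
      Step apply (.run (.alap P) G) (.result G)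
  | or₁ {P Q G} : Step apply (.run (.or P Q) G) (.run P G)
  | or₂ {P Q G} : Step apply (.run (.or P Q) G) (.run Q G)
  | skip {G} : Step apply (.run .skip G) (.result G)
  | fail {G} : Step apply (.run .fail G) .fail
  | if₃ {C P G H} : StepPlus apply (.run C G) (.result H) →
      Step apply (.run (.if1 C P) G) (.run P G)
  | if₄ {C P G} : StepPlus apply (.run C G) .fail →
      Step apply (.run (.if1 C P) G) (.result G)
  | try₃ {C P G H} : StepPlus apply (.run C G) (.result H) →
      Step apply (.run (.try1 C P) G) (.run P H)
  | try₄ {C P G} : StepPlus apply (.run C G) .fail →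
      Step apply (.run (.try1 C P) G) (.result G)

/-- The transitive closure →⁺ of the small-step relation. -/
inductive StepPlus {R Graph : Type} (apply : R → Graph → Graph → Prop) :
    Config R Graph → Config R Graph → Prop where
  | single {γ δ} : Step apply γ δ → StepPlus apply γ δ
  | tail {γ δ ε} : StepPlus apply γ δ → Step apply δ ε → StepPlus apply γ ε
end

/-- `P` can diverge from `G`: there is an infinite →-sequence from ⟨P,G⟩. -/
def CanDiverge {R Graph : Type} (apply : R → Graph → Graph → Prop)
    (P : Prog R) (G : Graph) : Prop :=
  ∃ f : ℕ → Config R Graph, f 0 = .run P G ∧ ∀ n, Step apply (f n) (f (n + 1))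

/-- `P` can get stuck from `G`: some terminal configuration ⟨Q,H⟩ is reachable (→*) from ⟨P,G⟩. -/
def CanGetStuck {R Graph : Type} (apply : R → Graph → Graph → Prop)
    (P : Prog R) (G : Graph) : Prop :=
  ∃ Q H, Relation.ReflTransGen (Step apply) (.run P G) (.run Q H) ∧
    ∀ δ, ¬ Step apply (.run Q H) δ

/-- Possible outcomes of a program run: a proper result graph, failure, or ⊥. -/
inductive SemVal (Graph : Type) : Type where
  | graph : Graph → SemVal Graph
  | fail  : SemVal Graph
  | bot   : SemVal Graph

/-- The semantic function: `Sem apply P G` is the set of all possible results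
    of executing `P` on `G`. -/
def Sem {R Graph : Type} (apply : R → Graph → Graph → Prop)
    (P : Prog R) (G : Graph) : Set (SemVal Graph) :=
  fun X => match X with
    | .graph H => StepPlus apply (.run P G) (.result H)
    | .fail => StepPlus apply (.run P G) .fail
    | .bot => CanDiverge apply P G ∨ CanGetStuck apply P G

/-- Semantic equivalence of programs. -/
def ProgEquiv {R Graph : Type} (apply : R → Graph → Graph → Prop)
    (P Q : Prog R) : Prop :=
  ∀ G, Sem apply P G = Sem apply Q G


section Aux
variable {R Graph : Type} (apply : R → Graph → Graph → Prop)

/-- Configurations reachable from a try-with-skip-branches configuration. -/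
def TryInv (C : Prog R) (γ : Config R Graph) : Prop :=
  (∃ G, γ = .run (.tryte C .skip .skip) G) ∨
  (∃ H, γ = .run .skip H) ∨ (∃ H, γ = .result H)

lemma step_tryInv {C : Prog R} {γ δ : Config R Graph}
    (hinv : TryInv C γ) (h : Step apply γ δ) : TryInv C δ := by
  rcases hinv with ⟨G, rfl⟩ | ⟨H, rfl⟩ | ⟨H, rfl⟩
  · cases h with
    | try₁ h => exact Or.inr (Or.inl ⟨_, rfl⟩)
    | try₂ h => exact Or.inr (Or.inl ⟨_, rfl⟩)
  · cases h with
    | skip => exact Or.inr (Or.inr ⟨_, rfl⟩)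
  · cases h

lemma stepPlus_transGen {γ δ : Config R Graph} (h : StepPlus apply γ δ) :
    Relation.TransGen (Step apply) γ δ := by
  refine h.rec (motive_1 := fun _ _ _ => True)
    (motive_2 := fun γ δ _ => Relation.TransGen (Step apply) γ δ)
    ?_ ?_ ?_ ?_ ?_ ?_ ?_ ?_ ?_ ?_ ?_ ?_ ?_ ?_ ?_ ?_ ?_ ?_ ?_ ?_ ?_
  all_goals intros
  any_goals exact trivial
  all_goals solve_by_elim [Relation.TransGen.single, Relation.TransGen.tail]

lemma plus_tryInv {C : Prog R} {γ δ : Config R Graph}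
    (h : StepPlus apply γ δ) (hinv : TryInv C γ) : TryInv C δ := by
  have ht := stepPlus_transGen apply h
  clear h
  induction ht with
  | single h => exact step_tryInv apply hinv h
  | tail _ h ih => exact step_tryInv apply ih h

end Aux

/-- in general, try C then P else Q is NOT semantically equivalent
    to if C then C;P else Q. A witness is C = skip or fail, P = Q = skip:
    the try-program cannot fail from any graph, the if-program can fail from
    every graph, hence the two programs have different semantic functions. -/
theorem try_not_equiv_if_seq {R Graph : Type} [Nonempty Graph]
    (apply : R → Graph → Graph → Prop) :
    (∀ G : Graph,
      SemVal.fail ∉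
        Sem apply
          (Prog.tryte (Prog.or Prog.skip Prog.fail) Prog.skip Prog.skip) G) ∧
    (∀ G : Graph,
      SemVal.fail ∈
        Sem apply
          (Prog.ite (Prog.or Prog.skip Prog.fail)
            (Prog.seq (Prog.or Prog.skip Prog.fail) Prog.skip) Prog.skip) G) ∧
    ∃ C P Q : Prog R,
      ¬ ProgEquiv apply (Prog.tryte C P Q) (Prog.ite C (Prog.seq C P) Q) := by

  have hC : ∀ G : Graph, StepPlus apply
      (.run (Prog.or (R := R) Prog.skip Prog.fail) G) (.result G) :=
    fun G => StepPlus.tail (StepPlus.single Step.or₁) Step.skip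
  have hCfail : ∀ G : Graph, StepPlus apply
      (.run (Prog.or (R := R) Prog.skip Prog.fail) G) .fail :=
    fun G => StepPlus.tail (StepPlus.single Step.or₂) Step.fail
  have hNoFail : ∀ G : Graph,
      SemVal.fail ∉ Sem apply
        (Prog.tryte (Prog.or Prog.skip Prog.fail) Prog.skip Prog.skip) G := by
    intro G h
    have := plus_tryInv apply h (Or.inl ⟨G, rfl⟩)
    rcases this with ⟨_, h⟩ | ⟨_, h⟩ | ⟨_, h⟩ <;> cases h
  have hFail : ∀ G : Graph,
      SemVal.fail ∈ Sem apply
        (Prog.ite (Prog.or Prog.skip Prog.fail)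
          (Prog.seq (Prog.or Prog.skip Prog.fail) Prog.skip) Prog.skip) G := by
    intro G
    have h1 : Step apply
        (.run (Prog.ite (Prog.or Prog.skip Prog.fail)
          (Prog.seq (Prog.or Prog.skip Prog.fail) Prog.skip) Prog.skip) G)
        (.run (Prog.seq (Prog.or Prog.skip Prog.fail) Prog.skip) G) :=
      Step.if₁ (hC G)
    have h2 : Step apply
        (.run (Prog.seq (Prog.or Prog.skip Prog.fail) Prog.skip) G)
        (.run (Prog.seq (R := R) Prog.fail Prog.skip) G) :=
      Step.seq₁ Step.or₂
    exact StepPlus.tail (StepPlus.tail (StepPlus.single h1) h2)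
      (Step.seq₃ Step.fail)
  refine ⟨hNoFail, hFail, Prog.or Prog.skip Prog.fail, Prog.skip, Prog.skip, ?_⟩
  intro hequiv
  obtain ⟨G⟩ := ‹Nonempty Graph›
  have := hequiv G
  exact hNoFail G (this ▸ hFail G)
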